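/- Existence and uniqueness of the extended approximation operator: if the linear map P : V → X (with range in S) satisfies P u = u for all u ∈ V ∩ S and P is bounded, then there exists a unique bounded linear projection P̄ : X → X with range S (i.e. P̄ ∘ P̄ = P̄ and P̄(X) = S) such that P̄ restricted to V equals P. -/

import Mathlib

/-- **Extended approximation operator.** If the linear map `P : V → X` (with range in `S`)
satisfies `P u = u` for all `u ∈ V ∩ S` and `P` is bounded, then there exists a unique
bounded linear projection `P̄ : X → X` with range `S` whose restriction to `V` equals `P`. -/
theorem exists_unique_extended_approximation_operator
    {X : Type*} [NormedAddCommGroup X] [InnerProductSpace ℝ X] [CompleteSpace X]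
    (V S : Submodule ℝ X) [CompleteSpace V] [FiniteDimensional ℝ S]
    (hSne : S ≠ ⊥) (hsum : V ⊔ S = ⊤)
    (P : V →ₗ[ℝ] X) (hrange : ∀ v : V, P v ∈ S)
    (hcons : ∀ u : V, (u : X) ∈ S → P u = (u : X))
    (hbdd : ∃ C : ℝ, ∀ v : V, ‖P v‖ ≤ C * ‖(v : X)‖) :
    ∃! Pbar : X →L[ℝ] X,
      (∀ x : X, Pbar (Pbar x) = Pbar x) ∧ Set.range Pbar = (S : Set X) ∧
        ∀ v : V, Pbar v = P v := by
  classical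
  -- combine `P` and the inclusion of `S` into one partial linear map on `V ⊔ S = ⊤`
  set f : X →ₗ.[ℝ] X := ⟨V, P⟩
  set g : X →ₗ.[ℝ] X := ⟨S, S.subtype⟩
  have H : ∀ (x : f.domain) (y : g.domain), (x : X) = y → f x = g y := by
    rintro ⟨x, hx⟩ ⟨y, hy⟩ h
    dsimp only [f, g] at *
    subst h
    simpa using hcons ⟨x, hx⟩ hy
  set F : X →ₗ.[ℝ] X := f.sup g H with hF
  have hdom : F.domain = ⊤ := by
    rw [hF, LinearPMap.domain_sup]; exact hsum
  -- the underlying global linear map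
  set ι : X →ₗ[ℝ] F.domain := (LinearMap.id (R := ℝ) (M := X)).codRestrict F.domain
      (fun x => by rw [hdom]; trivial)
  set Q : X →ₗ[ℝ] X := F.toFun.comp ι with hQ
  have hQapp : ∀ (x : X) (v : f.domain) (s : g.domain), (v : X) + s = x → Q x = f v + g s := by
    intro x v s hvs
    exact LinearPMap.sup_apply H v s (ι x) hvs
  have hQV : ∀ v : V, Q v = P v := by
    intro v
    have := hQapp (v : X) v 0 (by simp)
    simpa [f] using this
  have hQS : ∀ s : S, Q s = s := by
    intro s
    have := hQapp (s : X) 0 s (by simp)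
    simpa [g] using this
  have hQmem : ∀ x : X, Q x ∈ S := by
    intro x
    have hx : x ∈ V ⊔ S := by rw [hsum]; trivial
    rcases Submodule.mem_sup.1 hx with ⟨v, hv, s, hs, rfl⟩
    have := hQapp (v + s) ⟨v, hv⟩ ⟨s, hs⟩ rfl
    rw [this]
    exact S.add_mem (hrange ⟨v, hv⟩) hs
  -- continuity: `X ⧸ V` (hence `Vᗮ`) is finite-dimensional
  have hquot : FiniteDimensional ℝ (X ⧸ V) := by
    have hsurj : Function.Surjective (V.mkQ.comp S.subtype) := by
      rw [← LinearMap.range_eq_top, LinearMap.range_comp, Submodule.range_subtype]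
      have : Submodule.map V.mkQ (V ⊔ S) = ⊤ := by
        rw [hsum, Submodule.map_top, LinearMap.range_eq_top]
        exact V.mkQ_surjective
      rw [Submodule.map_sup] at this
      simpa [Submodule.map_mkQ_eq_top] using this
    exact Module.Finite.of_surjective _ hsurj
  have hperp : FiniteDimensional ℝ Vᗮ := by
    have hinj : Function.Injective (V.mkQ.comp Vᗮ.subtype) := by
      rw [← LinearMap.ker_eq_bot, LinearMap.ker_comp, Submodule.ker_mkQ]
      rw [Submodule.eq_bot_iff]
      rintro ⟨x, hx⟩ hmem
      have : x ∈ V ⊓ Vᗮ := ⟨hmem, hx⟩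
      rw [Submodule.inf_orthogonal_eq_bot] at this
      simpa using this
    exact FiniteDimensional.of_injective _ hinj
  obtain ⟨C, hC⟩ := hbdd
  -- `P` as a continuous linear map
  set Pc : V →L[ℝ] X := P.mkContinuous C (fun v => hC v) with hPc
  -- `Q` restricted to `Vᗮ`, continuous since `Vᗮ` is finite-dimensional
  set Lc : Vᗮ →L[ℝ] X := LinearMap.toContinuousLinearMap (Q.comp Vᗮ.subtype) with hLc
  set Pbar : X →L[ℝ] X :=
      Pc.comp (V.orthogonalProjectionOnto) + Lc.comp (Vᗮ.orthogonalProjectionOnto) with hPbar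
  have hdecomp : ∀ x : X, (V.orthogonalProjectionOnto x : X) + (Vᗮ.orthogonalProjectionOnto x : X) = x :=
    fun x => V.starProjection_add_starProjection_orthogonal x
  have hPbarQ : ∀ x : X, Pbar x = Q x := by
    intro x
    have h1 : Pbar x = P (V.orthogonalProjectionOnto x) + Q (Vᗮ.orthogonalProjectionOnto x) := rfl
    rw [h1, ← hQV (V.orthogonalProjectionOnto x), ← map_add]
    rw [hdecomp x]
  refine ⟨Pbar, ⟨?_, ?_, ?_⟩, ?_⟩
  · intro x
    rw [hPbarQ, hPbarQ]
    exact hQS ⟨Q x, hQmem x⟩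
  · apply subset_antisymm
    · rintro _ ⟨x, rfl⟩
      rw [hPbarQ]
      exact hQmem x
    · intro s hs
      exact ⟨s, by rw [hPbarQ]; exact hQS ⟨s, hs⟩⟩
  · intro v
    rw [hPbarQ]
    exact hQV v
  · -- uniqueness
    rintro Q' ⟨hidem, hrangeQ', hresQ'⟩
    ext x
    have hQ'S : ∀ s : S, Q' s = s := by
      rintro ⟨s, hs⟩
      have : s ∈ Set.range Q' := by rw [hrangeQ']; exact hs
      rcases this with ⟨y, rfl⟩
      exact hidem y
    have hx : x ∈ V ⊔ S := by rw [hsum]; trivial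
    rcases Submodule.mem_sup.1 hx with ⟨v, hv, s, hs, rfl⟩
    have hPb : Pbar (v + s) = P ⟨v, hv⟩ + s := by
      rw [hPbarQ, hQapp (v + s) ⟨v, hv⟩ ⟨s, hs⟩ rfl]; rfl
    have hQ' : Q' (v + s) = P ⟨v, hv⟩ + s := by
      rw [map_add]
      rw [hresQ' ⟨v, hv⟩, hQ'S ⟨s, hs⟩]
    rw [hQ', hPb]
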